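/- Let Γ be a finite cubic (3-regular) simple graph of finite girth g ≥ 3, and let d = ⌊g/2⌋. Then every path u–v–w of length 2 in Γ lies on at most 2^{d−1} girth cycles of Γ. -/

import Mathlib

open SimpleGraph

/-- `s` is the edge set of some cycle of length `g` in `G`. -/
def IsGirthCycleEdgeSet {V : Type*} (G : SimpleGraph V) (g : ℕ) (s : Set (Sym2 V)) : Prop :=
  ∃ (u : V) (w : G.Walk u u), w.IsCycle ∧ w.length = g ∧ s = {e | e ∈ w.edges}

/-- The number of cycles of length `g` in `G` that contain the edge `e`. -/
noncomputable def girthCycleCount {V : Type*} (G : SimpleGraph V) (g : ℕ) (e : Sym2 V) : ℕ :=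
  Set.ncard {s : Set (Sym2 V) | IsGirthCycleEdgeSet G g s ∧ e ∈ s}

/-- The multiset of the numbers of `g`-cycles through the edges incident to `v`. -/
noncomputable def vertexSignature {V : Type*} [Fintype V] (G : SimpleGraph V) (g : ℕ)
    (v : V) : Multiset ℕ :=
  ((G.neighborSet v).toFinite.toFinset.val).map fun u => girthCycleCount G g s(v, u)

namespace Stmt10Aux

open SimpleGraph Walk

variable {V : Type*} {G : SimpleGraph V}

/-- penultimate vertex of a walk -/
def pen {a b : V} (p : G.Walk a b) : V := p.getVert (p.length - 1)

lemma pen_concat {a b c : V} (p : G.Walk a b) (h : G.Adj b c) :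
    pen (p.concat h) = b := by
  simp only [pen, concat_eq_append, getVert_append, length_append, length_cons, length_nil,
    Nat.zero_add, Nat.add_sub_cancel, lt_irrefl, if_false, Nat.sub_self, getVert_zero]

lemma pen_cons {a x b : V} (h : G.Adj a x) (r : G.Walk x b) (hr : r.length ≠ 0) :
    pen (cons h r) = pen r := by
  simp only [pen, length_cons, Nat.add_sub_cancel]
  rw [getVert_cons r h hr]

lemma pen_reverse {a b : V} (p : G.Walk a b) : pen p.reverse = p.getVert 1 := by
  rcases Nat.eq_zero_or_pos p.length with h0 | hpos
  · rw [pen, length_reverse, h0]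
    norm_num
    rw [getVert_of_length_le p (by omega)]
  · simp only [pen, length_reverse, getVert_reverse]
    congr 1
    omega

lemma snd_reverse {a b : V} (p : G.Walk a b) : p.reverse.getVert 1 = pen p := by
  rw [getVert_reverse]; rfl

lemma getVert_one_concat {a b c : V} (p : G.Walk a b) (h : G.Adj b c) (hp : ¬ p.Nil) :
    (p.concat h).getVert 1 = p.getVert 1 := by
  rw [not_nil_iff_lt_length] at hp
  rw [concat_eq_append, getVert_append]
  rcases Nat.lt_or_ge 1 p.length with h1 | h1
  · rw [if_pos h1]
  · have hl : p.length = 1 := by omega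
    rw [if_neg (by omega)]
    have h2 : (1 : ℕ) - p.length = 0 := by omega
    rw [h2, getVert_zero, show (1:ℕ) = p.length from hl.symm, getVert_length]

lemma snd_append {a b c : V} (p : G.Walk a b) (q : G.Walk b c) (hp : ¬ p.Nil) :
    (p.append q).getVert 1 = p.getVert 1 := by
  rw [not_nil_iff_lt_length] at hp
  rw [getVert_append]
  rcases Nat.lt_or_ge 1 p.length with h1 | h1
  · rw [if_pos h1]
  · have hl : p.length = 1 := by omega
    rw [if_neg (by omega)]
    have h2 : (1 : ℕ) - p.length = 0 := by omega
    rw [h2, getVert_zero, show (1:ℕ) = p.length from hl.symm, getVert_length]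

lemma pen_append {a b c : V} (p : G.Walk a b) (q : G.Walk b c) (hq : ¬ q.Nil) :
    pen (p.append q) = pen q := by
  rw [not_nil_iff_lt_length] at hq
  simp only [pen, length_append, getVert_append]
  rw [if_neg (by omega)]
  congr 1
  omega

lemma getVert_cons_one {u v w : V} (q : G.Walk v w) (h : G.Adj u v) :
    (q.cons h).getVert 1 = v := (getVert_cons_succ (n := 0) q h).trans (getVert_zero q)

lemma exists_concat' {a b : V} (p : G.Walk a b) (hp : ¬ p.Nil) :
    ∃ (c : V) (q : G.Walk a c) (h : G.Adj c b), p = q.concat h ∧ c = pen p := by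
  have hrev : ¬ p.reverse.Nil := by
    rw [not_nil_iff_lt_length] at hp ⊢
    rwa [length_reverse]
  obtain ⟨y, h, t, hrec⟩ := not_nil_iff.mp hrev
  refine ⟨y, t.reverse, h.symm, ?_, ?_⟩
  · rw [← reverse_reverse p, hrec, reverse_cons, ← concat_eq_append]
  · rw [← snd_reverse, hrec, getVert_cons_one]

lemma adj_pen_end {a b : V} (p : G.Walk a b) (hp : ¬ p.Nil) : G.Adj (pen p) b := by
  obtain ⟨c, q, h, hpe, hc⟩ := exists_concat' p hp
  exact hc ▸ h

lemma edge_pen_end_mem {a b : V} (p : G.Walk a b) (hp : ¬ p.Nil) :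
    s(pen p, b) ∈ p.edges := by
  obtain ⟨c, q, h, hpe, hc⟩ := exists_concat' p hp
  rw [← hc, hpe, edges_concat]
  simp

lemma pen_mem_support {a b : V} (p : G.Walk a b) (hp : ¬ p.Nil) : pen p ∈ p.support := by
  obtain ⟨c, q, h, hpe, hc⟩ := exists_concat' p hp
  rw [← hc, hpe, concat_eq_append, mem_support_append_iff]
  exact Or.inl (end_mem_support q)

lemma eq_cons_nil {a b : V} (p : G.Walk a b) (hp : p.length = 1) :
    ∃ h : G.Adj a b, p = cons h nil := by
  cases p with
  | nil => simp at hp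
  | cons h r =>
    rw [length_cons, Nat.add_eq_right] at hp
    have := eq_of_length_eq_zero hp
    subst this
    rw [length_eq_zero_iff, nil_iff_eq_nil] at hp
    subst hp
    exact ⟨h, rfl⟩

lemma eq_of_length_one {a b : V} (p q : G.Walk a b) (hp : p.length = 1) (hq : q.length = 1) :
    p = q := by
  obtain ⟨h1, rfl⟩ := eq_cons_nil p hp
  obtain ⟨h2, rfl⟩ := eq_cons_nil q hq
  rfl

lemma length_one_of_mem_edge {a b : V} (p : G.Walk a b) (hp : p.IsPath)
    (hab : s(a, b) ∈ p.edges) : p.length = 1 := by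
  cases p with
  | nil => simp at hab
  | cons h r =>
    rw [edges_cons, List.mem_cons] at hab
    rw [cons_isPath_iff] at hp
    rcases hab with hab | hab
    · rw [Sym2.eq_iff] at hab
      rcases hab with ⟨-, rfl⟩ | ⟨rfl, rfl⟩
      · rw [length_cons, isPath_iff_eq_nil.mp hp.1, length_nil]
      · exact absurd rfl h.ne
    · exact absurd (fst_mem_support_of_mem_edges r hab) hp.2

lemma end_edge {a b : V} (p : G.Walk a b) (hp : p.IsPath) {y : V}
    (hy : s(b, y) ∈ p.edges) : y = pen p := by
  induction p with
  | nil => simp at hy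
  | @cons a x b h r ih =>
    rw [edges_cons, List.mem_cons] at hy
    rw [cons_isPath_iff] at hp
    rcases hy with hy | hy
    · rw [Sym2.eq_iff] at hy
      rcases hy with ⟨rfl, rfl⟩ | ⟨rfl, rfl⟩
      · exact absurd (end_mem_support r) hp.2
      · have : r = nil := isPath_iff_eq_nil.mp hp.1
        subst this
        rfl
    · have hrlen : r.length ≠ 0 := by
        intro h0
        have h1 : r.edges = [] := List.length_eq_zero_iff.mp ((length_edges r).trans h0)
        rw [h1] at hy
        simp at hy
      rw [pen_cons h r hrlen]
      exact ih hp.1 hy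


lemma cycle_edge_start {a : V} {C : G.Walk a a} (hC : C.IsCycle) {y : V}
    (hy : s(a, y) ∈ C.edges) : y = C.getVert 1 ∨ y = pen C := by
  obtain ⟨x, h, T, rfl⟩ := not_nil_iff.mp hC.not_nil
  have h3 := hC.three_le_length
  rw [length_cons] at h3
  obtain ⟨hTpath, hTe⟩ := (cons_isCycle_iff T h).mp hC
  rw [edges_cons, List.mem_cons] at hy
  rcases hy with hy | hy
  · rw [Sym2.eq_iff] at hy
    rcases hy with ⟨-, rfl⟩ | ⟨rfl, -⟩
    · left
      rw [getVert_cons_one]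
    · exact absurd rfl h.ne
  · right
    rw [pen_cons h T (by omega)]
    exact end_edge T hTpath hy

lemma snd_ne_pen {a : V} {C : G.Walk a a} (hC : C.IsCycle) : C.getVert 1 ≠ pen C := by
  obtain ⟨x, h, T, rfl⟩ := not_nil_iff.mp hC.not_nil
  have h3 := hC.three_le_length
  rw [length_cons] at h3
  obtain ⟨hTpath, hTe⟩ := (cons_isCycle_iff T h).mp hC
  have hTnil : ¬ T.Nil := by rw [not_nil_iff_lt_length]; omega
  rw [getVert_cons_one, pen_cons h T (by omega)]
  intro hx
  apply hTe
  have := edge_pen_end_mem T hTnil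
  rw [← hx] at this
  rwa [Sym2.eq_swap] at this

lemma cycle_swap {a b : V} (P : G.Walk a b) (A : G.Walk b a) (hP : ¬ P.Nil) (hA : ¬ A.Nil)
    (h : (P.append A).IsCycle) : (A.append P).IsCycle := by
  rw [isCycle_def] at h ⊢
  obtain ⟨htrail, hnil, hnodup⟩ := h
  refine ⟨⟨?_⟩, ?_, ?_⟩
  · have h1 := htrail.edges_nodup
    rw [edges_append] at h1 ⊢
    exact List.perm_append_comm.nodup h1
  · intro hh
    have h1 := congrArg Walk.length hh
    rw [length_append, length_nil] at h1
    rw [not_nil_iff_lt_length] at hA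
    omega
  · rw [tail_support_append] at hnodup ⊢
    exact List.perm_append_comm.nodup hnodup

lemma cycle_reverse {a : V} {C : G.Walk a a} (hC : C.IsCycle) : C.reverse.IsCycle := by
  rw [isCycle_def] at hC ⊢
  obtain ⟨htrail, hnil, hnodup⟩ := hC
  refine ⟨?_, ?_, ?_⟩
  · rwa [reverse_isTrail_iff]
  · intro hh
    have h1 := congrArg Walk.length hh
    rw [length_reverse, length_nil] at h1
    exact hnil (nil_iff_eq_nil.mp (length_eq_zero_iff.mp h1))
  · rw [support_reverse, List.tail_reverse, List.nodup_reverse]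
    obtain ⟨x, h, T, rfl⟩ := not_nil_iff.mp (fun hn => hnil (nil_iff_eq_nil.mp hn))
    have hg : T.support.getLast T.support_ne_nil = a := getLast_support T
    have h1 : T.support.dropLast ++ [a] = T.support := by
      conv_rhs => rw [← List.dropLast_append_getLast T.support_ne_nil, hg]
    have h2 : (T.support.dropLast ++ [a]).Nodup := by
      rw [h1]
      rw [support_cons, List.tail_cons] at hnodup
      exact hnodup
    have h3 := (List.perm_append_singleton a _).nodup h2
    rw [support_cons, T.support_eq_cons, List.dropLast_cons₂, ← T.support_eq_cons]
    exact h3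

lemma tail_append_ne_nil {α : Type*} {l₁ l₂ : List α} (h : l₁ ≠ []) :
    (l₁ ++ l₂).tail = l₁.tail ++ l₂ := by
  cases l₁ with
  | nil => exact absurd rfl h
  | cons a t => rfl

lemma end_mem_support_tail {a b : V} (p : G.Walk a b) (hp : ¬ p.Nil) :
    b ∈ p.support.tail := by
  obtain ⟨c, q, h, hpe, -⟩ := exists_concat' p hp
  rw [hpe, concat_eq_append, support_append, tail_append_ne_nil q.support_ne_nil]
  simp

lemma paths_of_cycle_append {a b : V} {P : G.Walk a b} {A : G.Walk b a}
    (hc : (P.append A).IsCycle) (hP : ¬ P.Nil) (hA : ¬ A.Nil) : P.IsPath ∧ A.IsPath := by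
  obtain ⟨-, -, hnd⟩ := (Walk.isCycle_def _).mp hc
  rw [tail_support_append] at hnd
  obtain ⟨h1, h2, hdisj⟩ := List.nodup_append.mp hnd
  have hbP : b ∈ P.support.tail := end_mem_support_tail P hP
  have haA : a ∈ A.support.tail := end_mem_support_tail A hA
  constructor
  · rw [isPath_def, P.support_eq_cons]
    exact List.nodup_cons.mpr ⟨fun hmem => hdisj _ hmem _ haA rfl, h1⟩
  · rw [isPath_def, A.support_eq_cons]
    exact List.nodup_cons.mpr ⟨fun hmem => hdisj _ hbP _ hmem rfl, h2⟩

lemma two_paths : ∀ (n : ℕ) {a b : V} (p q : G.Walk a b), p.IsPath → q.IsPath → p ≠ q →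
    p.length + q.length ≤ n →
    ∃ (c : V) (r : G.Walk c c), r.IsCycle ∧ r.length ≤ p.length + q.length := by
  intro n
  induction n with
  | zero =>
    intro a b p q hp hq hne hlen
    have hp0 : p.length = 0 := by omega
    have hab := eq_of_length_eq_zero hp0
    subst hab
    have hq0 : q.length = 0 := by omega
    rw [length_eq_zero_iff, nil_iff_eq_nil] at hp0 hq0
    rw [hp0, hq0] at hne
    exact absurd rfl hne
  | succ n ih =>
    intro a b p q hp hq hne hlen
    classical
    by_cases hab : a = b
    · subst hab
      rw [isPath_iff_eq_nil] at hp hq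
      rw [hp, hq] at hne
      exact absurd rfl hne
    · by_cases hint : ∃ c, c ∈ p.support ∧ c ∈ q.support ∧ c ≠ a ∧ c ≠ b
      · obtain ⟨c, hcp, hcq, hca, hcb⟩ := hint
        have hps := take_spec p hcp
        have hqs := take_spec q hcq
        have hlp := congrArg Walk.length hps
        have hlq := congrArg Walk.length hqs
        rw [length_append] at hlp hlq
        have hp1 : 1 ≤ (p.takeUntil c hcp).length := by
          by_contra hcon
          push_neg at hcon
          exact hca (eq_of_length_eq_zero (p := p.takeUntil c hcp) (by omega)).symm
        have hp2 : 1 ≤ (p.dropUntil c hcp).length := by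
          by_contra hcon
          push_neg at hcon
          exact hcb (eq_of_length_eq_zero (p := p.dropUntil c hcp) (by omega))
        have hq1 : 1 ≤ (q.takeUntil c hcq).length := by
          by_contra hcon
          push_neg at hcon
          exact hca (eq_of_length_eq_zero (p := q.takeUntil c hcq) (by omega)).symm
        have hq2 : 1 ≤ (q.dropUntil c hcq).length := by
          by_contra hcon
          push_neg at hcon
          exact hcb (eq_of_length_eq_zero (p := q.dropUntil c hcq) (by omega))
        by_cases h1 : p.takeUntil c hcp = q.takeUntil c hcq
        · have h2 : p.dropUntil c hcp ≠ q.dropUntil c hcq := by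
            intro h2
            apply hne
            rw [← hps, ← hqs, h1, h2]
          have hrec : (p.dropUntil c hcp).length + (q.dropUntil c hcq).length ≤ n := by omega
          obtain ⟨c', r, hr, hrl⟩ := ih (p.dropUntil c hcp) (q.dropUntil c hcq)
            (hp.dropUntil hcp) (hq.dropUntil hcq) h2 hrec
          exact ⟨c', r, hr, by omega⟩
        · have hrec : (p.takeUntil c hcp).length + (q.takeUntil c hcq).length ≤ n := by omega
          obtain ⟨c', r, hr, hrl⟩ := ih (p.takeUntil c hcp) (q.takeUntil c hcq)
            (hp.takeUntil hcp) (hq.takeUntil hcq) h1 hrec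
          exact ⟨c', r, hr, by omega⟩
      · push_neg at hint
        refine ⟨a, p.append q.reverse, ?_, by rw [length_append, length_reverse]⟩
        have hpnil : ¬ p.Nil := not_nil_of_ne hab
        have hqnil : ¬ q.Nil := not_nil_of_ne hab
        have hqrev : q.reverse.IsPath := hq.reverse
        rw [isCycle_def]
        refine ⟨⟨?_⟩, ?_, ?_⟩
        · rw [edges_append, edges_reverse, List.nodup_append]
          refine ⟨hp.isTrail.edges_nodup, List.nodup_reverse.mpr hq.isTrail.edges_nodup, ?_⟩
          intro e hep e' heq he
          subst he
          rw [List.mem_reverse] at heq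
          revert hep heq
          refine Sym2.ind (fun x y => ?_) e
          intro hep heq
          have hadj := adj_of_mem_edges p hep
          have hxy : x ≠ y := hadj.ne
          have hxab : x = a ∨ x = b := by
            rcases eq_or_ne x a with h | h
            · exact Or.inl h
            · exact Or.inr (hint x (fst_mem_support_of_mem_edges p hep)
                (fst_mem_support_of_mem_edges q heq) h)
          have hyab : y = a ∨ y = b := by
            rcases eq_or_ne y a with h | h
            · exact Or.inl h
            · exact Or.inr (hint y (snd_mem_support_of_mem_edges p hep)
                (snd_mem_support_of_mem_edges q heq) h)
          rcases hxab with rfl | rfl <;> rcases hyab with rfl | rfl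
          · exact hxy rfl
          · exact hne (eq_of_length_one p q (length_one_of_mem_edge p hp hep)
              (length_one_of_mem_edge q hq heq))
          · rw [Sym2.eq_swap] at hep heq
            exact hne (eq_of_length_one p q (length_one_of_mem_edge p hp hep)
              (length_one_of_mem_edge q hq heq))
          · exact hxy rfl
        · intro hh
          have h1 := congrArg Walk.length hh
          rw [length_append, length_nil, length_reverse] at h1
          rw [not_nil_iff_lt_length] at hpnil
          omega
        · rw [tail_support_append, List.nodup_append]
          have hnp := hp.support_nodup
          have hnq := hqrev.support_nodup
          rw [p.support_eq_cons, List.nodup_cons] at hnp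
          rw [q.reverse.support_eq_cons, List.nodup_cons] at hnq
          refine ⟨hnp.2, hnq.2, ?_⟩
          intro x hx1 x' hx2 hxx
          subst hxx
          have hxa : x ≠ a := fun h => hnp.1 (h ▸ hx1)
          have hxb : x ≠ b := fun h => hnq.1 (h ▸ hx2)
          have hx1' : x ∈ p.support := List.mem_of_mem_tail hx1
          have hx2' : x ∈ q.support := by
            have := List.mem_of_mem_tail hx2
            rwa [support_reverse, List.mem_reverse] at this
          exact hxb (hint x hx1' hx2' hxa)

open scoped Classical in
noncomputable def nxt (s : Set (Sym2 V)) (p c : V) : V :=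
  if h : ∃ y, s(c, y) ∈ s ∧ y ≠ p then h.choose else c

noncomputable def seq (s : Set (Sym2 V)) (v w : V) : ℕ → V × V
  | 0 => (v, w)
  | n + 1 => ((seq s v w n).2, nxt s (seq s v w n).1 (seq s v w n).2)

variable {V : Type*} {G : SimpleGraph V}

lemma exists_oriented {g : ℕ} {s : Set (Sym2 V)} {u v w : V}
    (hgc : IsGirthCycleEdgeSet G g s) (huv : s(u,v) ∈ s) (hvw : s(v,w) ∈ s) (huw : u ≠ w) :
    ∃ Q : G.Walk v v, Q.IsCycle ∧ Q.length = g ∧ {e | e ∈ Q.edges} = s ∧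
      Q.getVert 1 = w ∧ pen Q = u := by
  classical
  obtain ⟨a, W, hW, hWl, rfl⟩ := hgc
  have huv' : s(u, v) ∈ W.edges := huv
  have hvw' : s(v, w) ∈ W.edges := hvw
  have hv : v ∈ W.support := snd_mem_support_of_mem_edges W huv'
  have hQc : (W.rotate v hv).IsCycle := hW.rotate hv
  have hperm : (W.rotate v hv).edges.Perm W.edges := (rotate_edges W v hv).perm
  have hlen : (W.rotate v hv).length = g := by
    have h := hperm.length_eq
    rwa [length_edges, length_edges, hWl] at h
  have hset : {e | e ∈ (W.rotate v hv).edges} = {e | e ∈ W.edges} := by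
    ext e; exact hperm.mem_iff
  have h1 : s(v, w) ∈ (W.rotate v hv).edges := hperm.mem_iff.mpr hvw'
  have h2 : s(v, u) ∈ (W.rotate v hv).edges := hperm.mem_iff.mpr (Sym2.eq_swap ▸ huv')
  rcases cycle_edge_start hQc h1 with hw1 | hw1
  · refine ⟨W.rotate v hv, hQc, hlen, hset, hw1.symm, ?_⟩
    rcases cycle_edge_start hQc h2 with hu1 | hu1
    · exact absurd (hu1.trans hw1.symm) huw
    · exact hu1.symm
  · rcases cycle_edge_start hQc h2 with hu1 | hu1
    · refine ⟨(W.rotate v hv).reverse, cycle_reverse hQc, by rwa [length_reverse], ?_, ?_, ?_⟩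
      · rw [← hset]
        ext e
        rw [Set.mem_setOf_eq, Set.mem_setOf_eq, edges_reverse, List.mem_reverse]
      · rw [snd_reverse]; exact hw1.symm
      · rw [pen_reverse]; exact hu1.symm
    · exact absurd (hu1.trans hw1.symm) huw

lemma main_inv {g : ℕ} {s : Set (Sym2 V)} {u v w : V}
    (hgc : IsGirthCycleEdgeSet G g s) (huv : s(u,v) ∈ s) (hvw : s(v,w) ∈ s) (huw : u ≠ w) :
    ∀ n, n + 2 ≤ g → ∃ (x : V) (P : G.Walk v x) (A : G.Walk x v),
      (P.append A).IsCycle ∧ {e | e ∈ (P.append A).edges} = s ∧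
      (P.append A).length = g ∧ P.length = n + 1 ∧
      seq s v w n = (pen P, x) ∧ P.getVert 1 = w ∧
      P.edges = (List.range (n+1)).map (fun k => s((seq s v w k).1, (seq s v w k).2)) := by
  intro n
  induction n with
  | zero =>
    intro hn
    obtain ⟨Q, hQc, hQl, hQs, hQsnd, hQpen⟩ := exists_oriented hgc huv hvw huw
    obtain ⟨x, h, T, rfl⟩ := not_nil_iff.mp hQc.not_nil
    rw [getVert_cons_one] at hQsnd
    subst hQsnd
    refine ⟨x, cons h nil, T, ?_, ?_, ?_, ?_, ?_, ?_, ?_⟩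
    · rw [cons_nil_append]; exact hQc
    · rw [cons_nil_append]; exact hQs
    · rw [cons_nil_append]; exact hQl
    · rfl
    · show (v, x) = (pen (cons h nil), x)
      simp [pen]
    · exact getVert_cons_one nil h
    · rfl
  | succ n ih =>
    intro hn
    obtain ⟨x, P, A, hcyc, hset, hlen, hPlen, hseq, hsnd, hedg⟩ := ih (by omega)
    have hla := hlen
    rw [length_append, hPlen] at hla
    have hAnil : ¬ A.Nil := by rw [not_nil_iff_lt_length]; omega
    have hPnil : ¬ P.Nil := by rw [not_nil_iff_lt_length]; omega
    have hC : (A.append P).IsCycle := cycle_swap P A hPnil hAnil hcyc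
    have hsetC : ∀ e, e ∈ (A.append P).edges ↔ e ∈ s := by
      intro e
      rw [← hset]
      rw [Set.mem_setOf_eq, edges_append, edges_append, List.mem_append, List.mem_append]
      exact or_comm
    obtain ⟨z, hAz, A', rfl⟩ := not_nil_iff.mp hAnil
    have hsC : ((cons hAz A').append P).getVert 1 = z := by
      rw [snd_append _ _ not_nil_cons]
      exact getVert_cons_one A' hAz
    have hpC : pen ((cons hAz A').append P) = pen P := pen_append _ _ hPnil
    have hzne : z ≠ pen P := by
      have h := snd_ne_pen hC
      rwa [hsC, hpC] at h
    have hmemz : s(x, z) ∈ s := by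
      apply (hsetC _).mp
      rw [edges_append]
      exact List.mem_append_left _ (by rw [edges_cons]; exact List.mem_cons_self)
    have hnxt : nxt s (pen P) x = z := by
      have hex : ∃ y, s(x, y) ∈ s ∧ y ≠ pen P := ⟨z, hmemz, hzne⟩
      rw [nxt, dif_pos hex]
      obtain ⟨hc1, hc2⟩ := hex.choose_spec
      rcases cycle_edge_start hC ((hsetC _).mpr hc1) with h' | h'
      · rw [h', hsC]
      · rw [hpC] at h'
        exact absurd h' hc2
    have hseq' : seq s v w (n+1) = (x, z) := by
      show ((seq s v w n).2, nxt s (seq s v w n).1 (seq s v w n).2) = (x, z)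
      rw [hseq]
      simpa using hnxt
    refine ⟨z, P.concat hAz, A', ?_, ?_, ?_, ?_, ?_, ?_, ?_⟩
    · rw [concat_append]; exact hcyc
    · rw [concat_append]; exact hset
    · rw [concat_append]; exact hlen
    · rw [length_concat, hPlen]
    · rw [hseq', pen_concat]
    · rw [getVert_one_concat P hAz hPnil]; exact hsnd
    · rw [edges_concat, List.concat_eq_append, hedg]
      conv_rhs => rw [List.range_succ]
      rw [List.map_append]
      congr 1
      simp [hseq']

open scoped Classical in
noncomputable def pkA (G : SimpleGraph V) (p c : V) : V :=
  if h : ∃ y, G.Adj c y ∧ y ≠ p then h.choose else p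

open scoped Classical in
noncomputable def pkB (G : SimpleGraph V) (p c : V) : V :=
  if h : ∃ y, G.Adj c y ∧ y ≠ p ∧ y ≠ pkA G p c then h.choose else p

lemma two_choice [Fintype V] [DecidableRel G.Adj] (hreg : G.IsRegularOfDegree 3)
    {p c y : V} (hcp : G.Adj c p) (hcy : G.Adj c y) (hyp : y ≠ p) :
    y = pkA G p c ∨ y = pkB G p c := by
  classical
  have hA : ∃ y, G.Adj c y ∧ y ≠ p := ⟨y, hcy, hyp⟩
  have hpkA : pkA G p c = hA.choose := dif_pos hA
  obtain ⟨hA1, hA2⟩ := hA.choose_spec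
  by_cases hy : y = pkA G p c
  · exact Or.inl hy
  · have hB : ∃ z, G.Adj c z ∧ z ≠ p ∧ z ≠ pkA G p c := ⟨y, hcy, hyp, hy⟩
    have hpkB : pkB G p c = hB.choose := dif_pos hB
    obtain ⟨hB1, hB2, hB3⟩ := hB.choose_spec
    right
    rw [hpkB]
    by_contra hne
    have hyA : y ≠ hA.choose := by rwa [hpkA] at hy
    have hpA : p ≠ hA.choose := fun h => hA2 h.symm
    have hpy : p ≠ y := fun h => hyp h.symm
    have hpB : p ≠ hB.choose := fun h => hB2 h.symm
    have hAB : hA.choose ≠ hB.choose := fun h => hB3 (by rw [← h]; exact hpkA.symm)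
    have hsub : ({p, hA.choose, y, hB.choose} : Finset V) ⊆ G.neighborFinset c := by
      intro z hz
      simp only [Finset.mem_insert, Finset.mem_singleton] at hz
      rw [mem_neighborFinset]
      rcases hz with rfl | rfl | rfl | rfl
      · exact hcp
      · exact hA1
      · exact hcy
      · exact hB1
    have hcard : ({p, hA.choose, y, hB.choose} : Finset V).card = 4 := by
      rw [Finset.card_insert_of_notMem (by simp [hpA, hpy, hpB]),
        Finset.card_insert_of_notMem (by simp [Ne.symm hyA, hAB]),
        Finset.card_insert_of_notMem (by simp [hne]),
        Finset.card_singleton]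
    have hle := Finset.card_le_card hsub
    have hdeg : (G.neighborFinset c).card = 3 := hreg c
    omega

end Stmt10Aux

open SimpleGraph.Walk Stmt10Aux in
/-- In a finite cubic simple graph of finite girth `g ≥ 3`, every
`2`-path `u–v–w` lies on at most `2^(⌊g/2⌋ - 1)` girth cycles. -/
theorem stmt10 {V : Type*} [Fintype V] (G : SimpleGraph V) [DecidableRel G.Adj]
    (g : ℕ) (hreg : G.IsRegularOfDegree 3) (hg3 : 3 ≤ g) (hg : G.egirth = (g : ℕ∞))
    (u v w : V) (huv : G.Adj u v) (hvw : G.Adj v w) (huw : u ≠ w) :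
    Set.ncard {s : Set (Sym2 V) |
        IsGirthCycleEdgeSet G g s ∧ s(u, v) ∈ s ∧ s(v, w) ∈ s} ≤ 2 ^ (g / 2 - 1) := by
  classical
  set d := g / 2 with hd
  set S := {s : Set (Sym2 V) | IsGirthCycleEdgeSet G g s ∧ s(u, v) ∈ s ∧ s(v, w) ∈ s} with hS
  set F : Set (Sym2 V) → (Fin (d - 1) → Prop) := fun s i =>
    ((seq s v w (i.1 + 1)).2 = pkB G (seq s v w i.1).1 (seq s v w i.1).2) with hF
  have hinj : Set.InjOn F S := by
    intro s hs s' hs' hFF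
    obtain ⟨hgc, hsuv, hsvw⟩ := hs
    obtain ⟨hgc', hsuv', hsvw'⟩ := hs'
    have hseqeq : ∀ n, n ≤ d - 1 → seq s v w n = seq s' v w n := by
      intro n
      induction n with
      | zero => intro _; rfl
      | succ n ihn =>
        intro hn1
        have hEq := ihn (by omega)
        have hgbound : n + 1 + 2 ≤ g := by omega
        obtain ⟨x0, P0, A0, hc0, hs0, hl0, hpl0, hsq0, hsn0, hed0⟩ :=
          main_inv hgc hsuv hsvw huw n (by omega)
        obtain ⟨x1, P1, A1, hc1, hs1, hl1, hpl1, hsq1, hsn1, hed1⟩ :=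
          main_inv hgc hsuv hsvw huw (n+1) (by omega)
        obtain ⟨x0', P0', A0', hc0', hs0', hl0', hpl0', hsq0', hsn0', hed0'⟩ :=
          main_inv hgc' hsuv' hsvw' huw n (by omega)
        obtain ⟨x1', P1', A1', hc1', hs1', hl1', hpl1', hsq1', hsn1', hed1'⟩ :=
          main_inv hgc' hsuv' hsvw' huw (n+1) (by omega)
        -- basic step facts for a walk family
        have hfacts : ∀ (t : Set (Sym2 V)) (x0 x1 : V) (P0 : G.Walk v x0) (P1 : G.Walk v x1)
            (A0 : G.Walk x0 v) (A1 : G.Walk x1 v),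
            (P0.append A0).IsCycle → (P1.append A1).IsCycle →
            P0.length = n + 1 → P1.length = n + 2 →
            seq t v w n = (pen P0, x0) → seq t v w (n+1) = (pen P1, x1) →
            P0.edges = (List.range (n+1)).map
              (fun k => s((seq t v w k).1, (seq t v w k).2)) →
            P1.edges = (List.range (n+2)).map
              (fun k => s((seq t v w k).1, (seq t v w k).2)) →
            (P1.append A1).length = g →
            G.Adj x0 x1 ∧ G.Adj x0 (pen P0) ∧ x1 ≠ pen P0 ∧
            (seq t v w (n+1)).2 = x1 ∧ (seq t v w n).1 = pen P0 ∧ (seq t v w n).2 = x0 := by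
          intro t x0 x1 P0 P1 A0 A1 hc0 hc1 hpl0 hpl1 hsq0 hsq1 hed0 hed1 hl1
          have hP0nil : ¬ P0.Nil := by rw [not_nil_iff_lt_length]; omega
          have hP1nil : ¬ P1.Nil := by rw [not_nil_iff_lt_length]; omega
          have hfst : (seq t v w (n+1)).1 = (seq t v w n).2 := rfl
          have hpen1 : pen P1 = x0 := by
            have h1 : (seq t v w (n+1)).1 = pen P1 := by rw [hsq1]
            have h2 : (seq t v w n).2 = x0 := by rw [hsq0]
            rw [← h1, hfst, h2]
          have hadj1 : G.Adj x0 x1 := hpen1 ▸ adj_pen_end P1 hP1nil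
          have hadj0 : G.Adj x0 (pen P0) := by
            have h2 : G.Adj (pen P0) x0 := adj_pen_end P0 hP0nil
            exact h2.symm
          have hlast : P1.edges = P0.edges ++ [s(x0, x1)] := by
            rw [hed0, hed1]
            rw [show n + 2 = (n+1) + 1 from rfl, List.range_succ, List.map_append]
            congr 1
            simp [hsq1, hpen1]
          have hne : x1 ≠ pen P0 := by
            intro hcon
            have hnodup : P1.edges.Nodup := by
              have htrail := ((Walk.isCycle_def _).mp hc1).1.edges_nodup
              rw [edges_append] at htrail
              exact (List.nodup_append.mp htrail).1
            rw [hlast] at hnodup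
            have hdisj := (List.nodup_append.mp hnodup).2.2
            have hmem : s(pen P0, x0) ∈ P0.edges := edge_pen_end_mem P0 hP0nil
            refine hdisj _ hmem (s(x0, x1)) (List.mem_singleton_self _) ?_
            rw [hcon, Sym2.eq_swap]
          exact ⟨hadj1, hadj0, hne, by rw [hsq1], by rw [hsq0], by rw [hsq0]⟩
        obtain ⟨had1, had0, hne1, hv1, hv2, hv3⟩ := hfacts s x0 x1 P0 P1 A0 A1 hc0 hc1 hpl0 hpl1
          hsq0 hsq1 hed0 hed1 hl1
        obtain ⟨had1', had0', hne1', hv1', hv2', hv3'⟩ := hfacts s' x0' x1' P0' P1' A0' A1'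
          hc0' hc1' hpl0' hpl1' hsq0' hsq1' hed0' hed1' hl1'
        -- align primed data
        have hx0 : x0' = x0 := by rw [← hv3', ← hEq, hv3]
        have hp0 : pen P0' = pen P0 := by rw [← hv2', ← hEq, hv2]
        -- the bit
        have hb := congrFun hFF (⟨n, by omega⟩ : Fin (d - 1))
        simp only [hF] at hb
        rw [← hEq] at hb
        have hiff := iff_of_eq hb
        -- two choices
        have hch : (seq s v w (n+1)).2 = pkA G (seq s v w n).1 (seq s v w n).2 ∨
            (seq s v w (n+1)).2 = pkB G (seq s v w n).1 (seq s v w n).2 := by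
          rw [hv1, hv2, hv3]
          exact two_choice hreg had0 had1 hne1
        have hch' : (seq s' v w (n+1)).2 = pkA G (seq s v w n).1 (seq s v w n).2 ∨
            (seq s' v w (n+1)).2 = pkB G (seq s v w n).1 (seq s v w n).2 := by
          have h0 : (seq s' v w (n+1)).2 = pkA G (seq s' v w n).1 (seq s' v w n).2 ∨
              (seq s' v w (n+1)).2 = pkB G (seq s' v w n).1 (seq s' v w n).2 := by
            rw [hv1', hv2', hv3']
            exact two_choice hreg had0' had1' hne1'
          rwa [← hEq] at h0
        have hsecond : (seq s v w (n+1)).2 = (seq s' v w (n+1)).2 := by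
          by_cases hyB : (seq s v w (n+1)).2 = pkB G (seq s v w n).1 (seq s v w n).2
          · rw [hyB, hiff.mp hyB]
          · have h1 := hch.resolve_right hyB
            have h2 := hch'.resolve_right (fun hcon => hyB (hiff.mpr hcon))
            rw [h1, h2]
        have hfirst : (seq s v w (n+1)).1 = (seq s' v w (n+1)).1 := by
          show (seq s v w n).2 = (seq s' v w n).2
          rw [hEq]
        exact Prod.ext hfirst hsecond
    -- endgame: compare the two cycles
    have hd1 : d - 1 + 2 ≤ g := by omega
    obtain ⟨x, P, A, hc, hsQ, hlQ, hplP, hsq, hsn, hed⟩ :=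
      main_inv hgc hsuv hsvw huw (d-1) hd1
    obtain ⟨x', P', A', hc', hsQ', hlQ', hplP', hsq', hsn', hed'⟩ :=
      main_inv hgc' hsuv' hsvw' huw (d-1) hd1
    have hEqd := hseqeq (d-1) le_rfl
    have hxx : x = x' := congrArg Prod.snd (hsq.symm.trans (hEqd.trans hsq'))
    subst hxx
    have hPP : P = P' := by
      apply Walk.edges_injective
      rw [hed, hed']
      apply List.map_congr_left
      intro k hk
      rw [List.mem_range] at hk
      rw [hseqeq k (by omega)]
    have hlensum : P.length + A.length = g := by
      have h := hlQ; rwa [length_append] at h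
    have hlensum' : P'.length + A'.length = g := by
      have h := hlQ'; rwa [length_append] at h
    have hPnil : ¬ P.Nil := by rw [not_nil_iff_lt_length]; omega
    have hP'nil : ¬ P'.Nil := by rw [not_nil_iff_lt_length]; omega
    have hAnil : ¬ A.Nil := by rw [not_nil_iff_lt_length]; omega
    have hA'nil : ¬ A'.Nil := by rw [not_nil_iff_lt_length]; omega
    have hpenA : pen A = u := by
      have hmemvu : s(v, u) ∈ (P.append A).edges := by
        have h1 : s(v, u) ∈ s := Sym2.eq_swap ▸ hsuv
        rw [← hsQ] at h1
        exact h1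
      rcases cycle_edge_start hc hmemvu with h1 | h1
      · rw [snd_append _ _ hPnil, hsn] at h1
        exact absurd h1.symm huw.symm
      · rw [pen_append _ _ hAnil] at h1
        exact h1.symm
    have hpenA' : pen A' = u := by
      have hmemvu : s(v, u) ∈ (P'.append A').edges := by
        have h1 : s(v, u) ∈ s' := Sym2.eq_swap ▸ hsuv'
        rw [← hsQ'] at h1
        exact h1
      rcases cycle_edge_start hc' hmemvu with h1 | h1
      · rw [snd_append _ _ hP'nil, hsn'] at h1
        exact absurd h1.symm huw.symm
      · rw [pen_append _ _ hA'nil] at h1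
        exact h1.symm
    obtain ⟨cB, B, hB, hAe, hcB⟩ := exists_concat' A hAnil
    obtain ⟨cB', B', hB', hAe', hcB'⟩ := exists_concat' A' hA'nil
    have hcc : cB' = cB := by
      rw [hcB.trans hpenA, hcB'.trans hpenA']
    subst hcc
    have hApath : A.IsPath := (paths_of_cycle_append hc hPnil hAnil).2
    have hA'path : A'.IsPath := (paths_of_cycle_append hc' hP'nil hA'nil).2
    have hBpath : B.IsPath := by
      rw [isPath_def]
      have h1 := hApath.support_nodup
      rw [hAe, concat_eq_append, support_append] at h1
      exact (List.nodup_append.mp h1).1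
    have hB'path : B'.IsPath := by
      rw [isPath_def]
      have h1 := hA'path.support_nodup
      rw [hAe', concat_eq_append, support_append] at h1
      exact (List.nodup_append.mp h1).1
    have hBlen : A.length = B.length + 1 := by
      have h := congrArg Walk.length hAe
      rwa [length_concat] at h
    have hB'len : A'.length = B'.length + 1 := by
      have h := congrArg Walk.length hAe'
      rwa [length_concat] at h
    by_cases hBB : B = B'
    · subst hBB
      have hAA : A = A' := by rw [hAe, hAe']
      rw [← hsQ, ← hsQ', hPP, hAA]
    · exfalso
      obtain ⟨c, r, hr, hrl⟩ := two_paths (B.length + B'.length) B B' hBpath hB'path hBB le_rfl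
      have hge : G.egirth ≤ (r.length : ℕ∞) := le_egirth.mp le_rfl c r hr
      rw [hg, Nat.cast_le] at hge
      omega
  calc S.ncard = (F '' S).ncard := (Set.ncard_image_of_injOn hinj).symm
    _ ≤ (Set.univ : Set (Fin (d-1) → Prop)).ncard :=
        Set.ncard_le_ncard (Set.subset_univ _) Set.finite_univ
    _ = 2 ^ (d - 1) := by
        rw [Set.ncard_univ, Nat.card_eq_fintype_card, Fintype.card_fun, Fintype.card_prop,
          Fintype.card_fin]
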